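/- Let μ be a Borel probability measure on ℝ^d with support κ. If 0 ∈ ri(conv κ) and h ∈ span(κ) satisfies (h, x) ≥ 0 for μ-almost every x, then h = 0. -/

import Mathlib

open MeasureTheory

/-- Support of a Borel measure on a metric space. -/
def mSupport {E : Type*} [MeasurableSpace E] [PseudoMetricSpace E] (μ : Measure E) : Set E :=
  {x | ∀ ε > 0, 0 < μ (Metric.ball x ε)}

/-- `ν` is a regular conditional distribution of `ξ` given the sub-σ-algebra `H`. -/
def IsRCD {Ω E : Type*} [MeasurableSpace Ω] [MeasurableSpace E]
    (H : MeasurableSpace Ω) (P : Measure Ω) (ξ : Ω → E) (ν : Ω → Measure E) : Prop :=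
  (∀ ω, IsProbabilityMeasure (ν ω)) ∧
  (∀ B : Set E, MeasurableSet B → Measurable[H] fun ω => ν ω B) ∧
  (∀ B : Set E, MeasurableSet B →
    (fun ω => (ν ω B).toReal) =ᵐ[P] condExp H P (Set.indicator (ξ ⁻¹' B) fun _ => (1 : ℝ)))
theorem stmt_6 (d : ℕ) (μ : Measure (EuclideanSpace ℝ (Fin d))) [IsProbabilityMeasure μ]
    (h0 : (0 : EuclideanSpace ℝ (Fin d)) ∈
      intrinsicInterior ℝ (convexHull ℝ (mSupport μ)))
    (h : EuclideanSpace ℝ (Fin d)) (hspan : h ∈ Submodule.span ℝ (mSupport μ))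
    (hpos : ∀ᵐ x ∂μ, 0 ≤ (inner ℝ h x : ℝ)) :
    h = 0 := by
  let E := EuclideanSpace ℝ (Fin d)
  set κ := mSupport μ with hκ
  set s := convexHull ℝ κ with hs
  -- μ of the negative halfspace is zero
  have hU : μ {x : E | (inner ℝ h x : ℝ) < 0} = 0 := by
    have := hpos
    rw [ae_iff] at this
    simpa only [not_le] using this
  -- nonnegative on the support
  have hκpos : ∀ x ∈ κ, 0 ≤ (inner ℝ h x : ℝ) := by
    intro x hx
    by_contra hlt
    push_neg at hlt
    have hopen : IsOpen {y : E | (inner ℝ h y : ℝ) < 0} :=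
      isOpen_lt (Continuous.inner continuous_const continuous_id) continuous_const
    obtain ⟨ε, hε, hball⟩ := Metric.isOpen_iff.mp hopen x hlt
    have h1 := hx ε hε
    have h2 : μ (Metric.ball x ε) = 0 := measure_mono_null hball hU
    rw [h2] at h1; exact lt_irrefl _ h1
  -- nonnegative on the convex hull
  have hlin : IsLinearMap ℝ (fun x : E => (inner ℝ h x : ℝ)) :=
    ⟨fun a b => inner_add_right h a b, fun c a => real_inner_smul_right h a c⟩
  have hconv : ∀ x ∈ s, 0 ≤ (inner ℝ h x : ℝ) := fun x hx =>
    convexHull_min hκpos (convex_halfSpace_ge hlin 0) hx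
  -- nonpositive on the support using the intrinsic interior condition
  obtain ⟨y, hy, hy0⟩ := h0
  obtain ⟨δ, hδ, hballsub⟩ := Metric.isOpen_iff.mp isOpen_interior y hy
  have hbally : ∀ z ∈ Metric.ball y δ, (z : EuclideanSpace ℝ (Fin d)) ∈ s :=
    fun z hz => Set.mem_preimage.mp (interior_subset (hballsub hz))
  have h0mem : (0 : E) ∈ affineSpan ℝ s := hy0 ▸ y.2
  have hκzero : ∀ x ∈ κ, (inner ℝ h x : ℝ) = 0 := by
    intro x hx
    have hxs : x ∈ s := subset_convexHull ℝ κ hx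
    have hxspan : x ∈ affineSpan ℝ s := subset_affineSpan ℝ s hxs
    set ε : ℝ := δ / (2 * (‖x‖ + 1)) with hε
    have hxn : (0:ℝ) < ‖x‖ + 1 := by positivity
    have hεpos : 0 < ε := by positivity
    have hdir : (-ε) • x ∈ (affineSpan ℝ s).direction := by
      have : x - 0 ∈ (affineSpan ℝ s).direction :=
        AffineSubspace.vsub_mem_direction hxspan h0mem
      simpa using Submodule.smul_mem _ (-ε) this
    have hmem : (-ε) • x ∈ affineSpan ℝ s := by
      have := AffineSubspace.vadd_mem_of_mem_direction hdir h0mem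
      simpa using this
    have hzball : (⟨(-ε) • x, hmem⟩ : affineSpan ℝ s) ∈ Metric.ball y δ := by
      rw [Metric.mem_ball, Subtype.dist_eq, hy0]
      have : dist ((-ε) • x) (0 : E) = ε * ‖x‖ := by
        rw [dist_zero_right, norm_smul]
        simp [abs_of_pos hεpos]
      rw [this, hε]
      rw [div_mul_eq_mul_div, div_lt_iff₀ (by positivity)]
      nlinarith [norm_nonneg x]
    have hins : (-ε) • x ∈ s := hbally _ hzball
    have h1 : 0 ≤ (inner ℝ h ((-ε) • x) : ℝ) := hconv _ hins
    rw [real_inner_smul_right] at h1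
    have h2 : 0 ≤ (inner ℝ h x : ℝ) := hκpos x hx
    nlinarith
  -- conclude
  have hker : κ ⊆ (LinearMap.ker (innerSL ℝ h : E →L[ℝ] ℝ).toLinearMap : Set E) := by
    intro x hx
    simpa [LinearMap.mem_ker] using hκzero x hx
  have : h ∈ LinearMap.ker (innerSL ℝ h : E →L[ℝ] ℝ).toLinearMap :=
    Submodule.span_le.mpr hker hspan
  have : (inner ℝ h h : ℝ) = 0 := by simpa using this
  exact inner_self_eq_zero.mp this
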